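/- Let m, u be integers with 2 ≤ u ≤ m and let Λ = P_{m,u} be the pseudo-ordinary semigroup with multiplicity m and jump u. Then c(Λ) = m + u; the right generators of Λ are exactly the integers σ with c(Λ) ≤ σ ≤ c(Λ) + m − 1 and σ ≠ 2m; and such a right generator σ is strong if and only if σ < c(Λ) + u. -/
import Mathlib


open Pointwise

namespace NumSgpPaper

/-- `S` is a numerical semigroup: an additive submonoid of ℕ with finite complement. -/
structure IsNumSgp (S : Set ℕ) : Prop where
  zero_mem : 0 ∈ S
  add_mem : ∀ ⦃a b : ℕ⦄, a ∈ S → b ∈ S → a + b ∈ S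
  cofinite : Sᶜ.Finite

/-- The Frobenius number: the largest gap of `S` (junk value `0` if there are no gaps). -/
noncomputable def frob (S : Set ℕ) : ℕ := sSup Sᶜ

open Classical in
/-- The conductor: one plus the largest gap, and `0` if there are no gaps (so `c(ℕ) = 0`). -/
noncomputable def conductor (S : Set ℕ) : ℕ := if Sᶜ = ∅ then 0 else frob S + 1

/-- The genus: the number of gaps. -/
noncomputable def genus (S : Set ℕ) : ℕ := Sᶜ.ncard

/-- The multiplicity: the smallest positive element. -/
noncomputable def mult (S : Set ℕ) : ℕ := sInf {n : ℕ | n ∈ S ∧ 0 < n}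

/-- The jump: the difference between the second and first positive elements. -/
noncomputable def jump (S : Set ℕ) : ℕ := sInf {n : ℕ | n ∈ S ∧ mult S < n} - mult S

/-- A minimal generator: a positive element of `S` that is not the sum of
two positive elements of `S`. -/
def IsMinGen (S : Set ℕ) (x : ℕ) : Prop :=
  0 < x ∧ x ∈ S ∧ ¬ ∃ a b : ℕ, 0 < a ∧ 0 < b ∧ a ∈ S ∧ b ∈ S ∧ a + b = x

/-- A right generator: a minimal generator larger than the Frobenius number. -/
def IsRightGen (S : Set ℕ) (x : ℕ) : Prop := IsMinGen S x ∧ frob S < x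

/-- A strong generator: a right generator `σ` such that `σ + m(S)` is a minimal
generator of `S \ {σ}`. -/
def IsStrongGen (S : Set ℕ) (σ : ℕ) : Prop :=
  IsRightGen S σ ∧ IsMinGen (S \ {σ}) (σ + mult S)

/-- `S` is ordinary when its gaps are exactly `{1, …, g(S)}`. -/
def IsOrdinary (S : Set ℕ) : Prop := Sᶜ = Set.Icc 1 (genus S)

/-- The left elements: the elements of `S` smaller than the Frobenius number. -/
def leftEls (S : Set ℕ) : Set ℕ := {x : ℕ | x ∈ S ∧ x < frob S}

/-- The gcd of a set of natural numbers. -/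
noncomputable def setGcd (A : Set ℕ) : ℕ :=
  sInf {d : ℕ | (∀ a ∈ A, d ∣ a) ∧ ∀ e : ℕ, (∀ a ∈ A, e ∣ a) → e ∣ d}

/-- `ω(S)`: the gcd of the left elements of `S`. -/
noncomputable def omega' (S : Set ℕ) : ℕ := setGcd (leftEls S)

/-- The shrinking of `S`: the additive submonoid of ℕ generated by the left
elements divided by their gcd. -/
noncomputable def shrink (S : Set ℕ) : Set ℕ :=
  (AddSubmonoid.closure ((fun x => x / omega' S) '' leftEls S) : AddSubmonoid ℕ)

/-- `T` is a descendant of `S`: a numerical semigroup contained in `S` all of whose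
missing elements lie beyond the Frobenius number of `S`. -/
def IsDescendant (S T : Set ℕ) : Prop :=
  IsNumSgp T ∧ T ⊆ S ∧ ∀ x ∈ S \ T, frob S < x

/-- The pseudo-ordinary semigroup `P_{m,u} = {0, m} ∪ {n : n ≥ m + u}`. -/
def P (m u : ℕ) : Set ℕ := {0, m} ∪ {n : ℕ | m + u ≤ n}

/-- The submonoid of ℕ generated by the interval `{a, …, b}`. -/
def intervalSgp (a b : ℕ) : Set ℕ := (AddSubmonoid.closure (Set.Icc a b) : AddSubmonoid ℕ)


lemma memP {m u x : ℕ} : x ∈ P m u ↔ x = 0 ∨ x = m ∨ m + u ≤ x := by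
  simp [P, Set.mem_union, Set.mem_insert_iff, Set.mem_setOf_eq, or_assoc]

lemma frob_P {m u : ℕ} (h2 : 2 ≤ u) (hum : u ≤ m) : frob (P m u) = m + u - 1 := by
  have hmem : (m + u - 1) ∈ (P m u)ᶜ := by
    rw [Set.mem_compl_iff, memP]; omega
  have hbdd : BddAbove (P m u)ᶜ := ⟨m + u, fun x hx => by
    rw [Set.mem_compl_iff, memP] at hx; omega⟩
  refine le_antisymm ?_ (le_csSup hbdd hmem)
  exact csSup_le ⟨_, hmem⟩ (fun x hx => by rw [Set.mem_compl_iff, memP] at hx; omega)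

lemma conductor_P {m u : ℕ} (h2 : 2 ≤ u) (hum : u ≤ m) : conductor (P m u) = m + u := by
  have hne : (P m u)ᶜ ≠ ∅ := by
    intro h
    have h1 : (1:ℕ) ∈ (P m u)ᶜ := by rw [Set.mem_compl_iff, memP]; omega
    rw [h] at h1; exact h1
  rw [conductor, if_neg hne, frob_P h2 hum]; omega

lemma mult_P {m u : ℕ} (h2 : 2 ≤ u) (hum : u ≤ m) : mult (P m u) = m := by
  refine le_antisymm (Nat.sInf_le ⟨memP.mpr (Or.inr (Or.inl rfl)), by omega⟩) ?_
  refine le_csInf ⟨m, memP.mpr (Or.inr (Or.inl rfl)), by omega⟩ ?_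
  rintro n ⟨hn, hpos⟩
  rw [memP] at hn; omega

/-- For the pseudo-ordinary semigroup `P_{m,u}` (with `2 ≤ u ≤ m`): `c = m + u`;
the right generators are exactly the integers in `[c, c + m - 1]` other than `2m`;
and such a right generator is strong iff it is `< c + u`. -/
theorem stmt3 (m u : ℕ) (h2 : 2 ≤ u) (hum : u ≤ m) :
    conductor (P m u) = m + u ∧
    (∀ σ : ℕ, IsRightGen (P m u) σ ↔
      conductor (P m u) ≤ σ ∧ σ ≤ conductor (P m u) + m - 1 ∧ σ ≠ 2 * m) ∧
    (∀ σ : ℕ, IsRightGen (P m u) σ →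
      (IsStrongGen (P m u) σ ↔ σ < conductor (P m u) + u)) := by
  have hc := conductor_P h2 hum
  have hf := frob_P h2 hum
  have hm := mult_P h2 hum
  have hmP : m ∈ P m u := memP.mpr (Or.inr (Or.inl rfl))
  have hchar : ∀ σ : ℕ, IsRightGen (P m u) σ ↔
      m + u ≤ σ ∧ σ ≤ m + u + m - 1 ∧ σ ≠ 2 * m := by
    intro σ
    constructor
    · rintro ⟨⟨hpos, hmem, hnd⟩, hgt⟩
      rw [hf] at hgt
      rw [memP] at hmem
      refine ⟨by omega, ?_, ?_⟩
      · by_contra hlt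
        push_neg at hlt
        exact hnd ⟨m, σ - m, by omega, by omega, hmP,
          memP.mpr (Or.inr (Or.inr (by omega))), by omega⟩
      · intro h2m
        exact hnd ⟨m, m, by omega, by omega, hmP, hmP, by omega⟩
    · rintro ⟨hlo, hhi, hne⟩
      refine ⟨⟨by omega, memP.mpr (Or.inr (Or.inr (by omega))), ?_⟩, by rw [hf]; omega⟩
      rintro ⟨a, b, ha, hb, haP, hbP, hab⟩
      rw [memP] at haP hbP
      omega
  refine ⟨hc, fun σ => by rw [hc, hchar], fun σ hrg => ?_⟩
  obtain ⟨hlo, hhi, hne2m⟩ := (hchar σ).mp hrg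
  rw [hc]
  constructor
  · rintro ⟨_, hsg⟩
    rw [hm] at hsg
    obtain ⟨hpos', hmem', hnd'⟩ := hsg
    by_contra hge
    push_neg at hge
    refine hnd' ⟨m + u, σ - u, by omega, by omega,
      ⟨memP.mpr (Or.inr (Or.inr le_rfl)), ?_⟩,
      ⟨memP.mpr (Or.inr (Or.inr (by omega))), ?_⟩, by omega⟩
    · simp only [Set.mem_singleton_iff]; omega
    · simp only [Set.mem_singleton_iff]; omega
  · intro hlt
    refine ⟨hrg, ?_⟩
    rw [hm]
    refine ⟨by omega, ⟨memP.mpr (Or.inr (Or.inr (by omega))), ?_⟩, ?_⟩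
    · simp only [Set.mem_singleton_iff]; omega
    · rintro ⟨a, b, ha, hb, ⟨haP, haσ⟩, ⟨hbP, hbσ⟩, hab⟩
      rw [memP] at haP hbP
      simp only [Set.mem_singleton_iff] at haσ hbσ
      omega

end NumSgpPaper
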